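/- Let η_{t-1} ≥ η_t > 0, p ∈ Δ_d with all p_i > 0, and ℓ ∈ [0,1]^d. Then (1/d) Σ_j p_j e^{-η_{t-1} ℓ_j} ≥ ((1/d) Σ_j p_j^{η_t/η_{t-1}} e^{-η_t ℓ_j})^{η_{t-1}/η_t}. -/

import Mathlib

open Real Finset

/-- The Jensen's inequality step (convexity of `x ↦ x^{η_{t-1}/η_t}`) used in
the proof of the time-varying learning-rate lemma:
`(1/d) Σ_j p_j e^{-η_{t-1} ℓ_j} ≥ ((1/d) Σ_j p_j^{η_t/η_{t-1}} e^{-η_t ℓ_j})^{η_{t-1}/η_t}`. -/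
theorem stmt18 (d : ℕ) (hd : 1 ≤ d) (ηt ηt' : ℝ) (hη : 0 < ηt) (hη' : ηt ≤ ηt')
    (p ℓ : Fin d → ℝ) (hp : ∀ i, 0 < p i) (hps : ∑ i, p i = 1)
    (hℓ : ∀ i, ℓ i ∈ Set.Icc (0 : ℝ) 1) :
    ((1 / d : ℝ) * ∑ j, p j ^ (ηt / ηt') * Real.exp (-ηt * ℓ j)) ^ (ηt' / ηt)
      ≤ (1 / d : ℝ) * ∑ j, p j * Real.exp (-ηt' * ℓ j) := by
  have hη'0 : (0:ℝ) < ηt' := lt_of_lt_of_le hη hη'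
  set θ : ℝ := ηt / ηt' with hθ
  set r : ℝ := ηt' / ηt with hr
  have hr1 : 1 ≤ r := (one_le_div hη).mpr hη'
  have hθr : θ * r = 1 := by
    rw [hθ, hr, div_mul_div_comm, mul_comm ηt ηt', div_self (mul_pos hη'0 hη).ne']
  have hd0 : (0:ℝ) < (d:ℝ) := by exact_mod_cast hd
  set a : Fin d → ℝ := fun j => p j * Real.exp (-ηt' * ℓ j) with ha
  have ha0 : ∀ j, 0 ≤ a j := fun j => le_of_lt (mul_pos (hp j) (Real.exp_pos _))
  have key : ∀ j, p j ^ θ * Real.exp (-ηt * ℓ j) = a j ^ θ := by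
    intro j
    rw [ha, Real.mul_rpow (hp j).le (Real.exp_pos _).le, ← Real.exp_mul]
    congr 2
    have hc : ηt' * θ = ηt := by
      rw [hθ, mul_div_assoc', mul_comm, mul_div_assoc, div_self hη'0.ne', mul_one]
    linear_combination ℓ j * hc
  -- power mean inequality with weights 1/d
  have hmean := Real.arith_mean_le_rpow_mean (univ : Finset (Fin d))
      (fun _ => (1/d : ℝ)) (fun j => a j ^ θ)
      (fun i _ => by positivity) (by simp; field_simp)
      (fun i _ => Real.rpow_nonneg (ha0 i) θ) hr1
  have hz : ∀ j, (a j ^ θ) ^ r = a j := by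
    intro j
    rw [← Real.rpow_mul (ha0 j), hθr, Real.rpow_one]
  simp only [hz] at hmean
  have hsum0 : 0 ≤ ∑ j, (1/d : ℝ) * a j ^ θ := by
    exact Finset.sum_nonneg fun i _ => mul_nonneg (by positivity) (Real.rpow_nonneg (ha0 i) θ)
  have := Real.rpow_le_rpow hsum0 hmean (le_trans zero_le_one hr1)
  have h1r : 1 / r * r = 1 := by
    field_simp
  rw [← Real.rpow_mul (Finset.sum_nonneg fun i _ => mul_nonneg (by positivity) (ha0 i)),
    h1r, Real.rpow_one] at this
  calc ((1 / d : ℝ) * ∑ j, p j ^ θ * Real.exp (-ηt * ℓ j)) ^ r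
      = (∑ j, (1/d:ℝ) * a j ^ θ) ^ r := by
        rw [Finset.mul_sum]; congr 1; exact Finset.sum_congr rfl fun j _ => by rw [key]
    _ ≤ ∑ j, (1/d:ℝ) * a j := this
    _ = (1 / d : ℝ) * ∑ j, p j * Real.exp (-ηt' * ℓ j) := by rw [Finset.mul_sum]
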